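/- arXiv:1711.06480 — 2 statements merged into one kernel-verified Lean document; each statement's English description precedes it below -/
import Mathlib

section
/- Let r : [0,∞) → ℝ be continuous and let c ≥ 0 be a constant such that liminf_{T→∞} ∫₀^T e^{-ct} r(t) dt - c/2 > 0 (the damped averaged null energy condition along the geodesic, phrased for the function r). Then for every z₀ > 0 there is no differentiable function z : [0,∞) → ℝ with z(0) = z₀ satisfying z'(t) ≥ z(t)²/2 + r(t) for all t ≥ 0. -/
open MeasureTheory Filter Set

/-- The focusing claim used in Theorem 2.1 (dANEC, `s = 2` case): if `r` is continuous on
`[0,∞)` and there is `c ≥ 0` with `liminf_{T→∞} ∫₀^T e^{-ct} r(t) dt - c/2 > 0`, then for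
every `z₀ > 0` there is no differentiable `z : [0,∞) → ℝ` with `z(0) = z₀` satisfying
`ż(t) ≥ z(t)²/2 + r(t)` for all `t ≥ 0`. -/
theorem dANEC_focusing
    (r : ℝ → ℝ) (hr : ContinuousOn r (Ici 0)) (c : ℝ) (hc : 0 ≤ c)
    (h : 0 < liminf (fun T : ℝ => ∫ t in (0:ℝ)..T, Real.exp (-c * t) * r t) atTop - c / 2) :
    ∀ z₀ : ℝ, 0 < z₀ →
      ¬ ∃ z z' : ℝ → ℝ, z 0 = z₀ ∧
        ∀ t ∈ Ici (0:ℝ),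
          HasDerivWithinAt z (z' t) (Ici 0) t ∧ z t ^ 2 / 2 + r t ≤ z' t := by
  intro z₀ hz₀
  rintro ⟨z, z', hz0, hz⟩
  -- continuity of z on [0,∞)
  have hzc : ContinuousOn z (Ici 0) := fun t ht => ((hz t ht).1).continuousWithinAt
  -- continuous extensions of z and r to all of ℝ
  set Z : ℝ → ℝ := fun t => z (max t 0) with hZdef
  set R : ℝ → ℝ := fun t => r (max t 0) with hRdef
  have hmax : Continuous fun t : ℝ => max t 0 := continuous_id.max continuous_const
  have hZ : Continuous Z := hzc.comp_continuous hmax fun x => Set.mem_Ici.mpr (le_max_right _ _)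
  have hR : Continuous R := hr.comp_continuous hmax fun x => Set.mem_Ici.mpr (le_max_right _ _)
  have hZeq : ∀ t : ℝ, 0 ≤ t → Z t = z t := fun t ht => by
    simp only [hZdef, max_eq_left ht]
  have hReq : ∀ t : ℝ, 0 ≤ t → R t = r t := fun t ht => by
    simp only [hRdef, max_eq_left ht]
  -- the weight
  have hec : Continuous fun t : ℝ => Real.exp (-c * t) :=
    Real.continuous_exp.comp (continuous_const.mul continuous_id)
  have hecd : ∀ t : ℝ, HasDerivAt (fun s => Real.exp (-c * s)) (Real.exp (-c * t) * (-c * 1)) t :=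
    fun t => ((hasDerivAt_id t).const_mul (-c)).exp
  -- auxiliary integrands
  set q : ℝ → ℝ := fun t => Real.exp (-c * t) * ((Z t - c) ^ 2 / 2) with hqdef
  set ψ : ℝ → ℝ := fun t => Real.exp (-c * t) * (R t - c ^ 2 / 2) with hψdef
  have hqc : Continuous q := hec.mul (((hZ.sub continuous_const).pow 2).div_const 2)
  have hψc : Continuous ψ := hec.mul (hR.sub continuous_const)
  have hqnn : ∀ t : ℝ, 0 ≤ q t := fun t => by
    have := (Real.exp_pos (-c * t)).le
    positivity
  set φ : ℝ → ℝ := fun t => q t + ψ t with hφdef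
  have hφc : Continuous φ := hqc.add hψc
  -- y = e^{-ct} z
  set y : ℝ → ℝ := fun t => Real.exp (-c * t) * z t with hydef
  have hy : ∀ t ∈ Ici (0:ℝ), HasDerivWithinAt y
      (Real.exp (-c * t) * (-c * 1) * z t + Real.exp (-c * t) * z' t) (Ici 0) t :=
    fun t ht => ((hecd t).hasDerivWithinAt).mul (hz t ht).1
  have hyc : ContinuousOn y (Ici 0) := hec.continuousOn.mul hzc
  -- Φ = ∫₀^T φ
  set Φ : ℝ → ℝ := fun T => ∫ t in (0:ℝ)..T, φ t with hΦdef
  have hΦ : ∀ t : ℝ, HasDerivAt Φ (φ t) t := fun t =>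
    (hφc.integral_hasStrictDerivAt 0 t).hasDerivAt
  -- pointwise inequality: φ ≤ y' on [0,∞)
  have hφle : ∀ t : ℝ, 0 ≤ t →
      φ t ≤ Real.exp (-c * t) * (-c * 1) * z t + Real.exp (-c * t) * z' t := by
    intro t ht
    have hE : (0:ℝ) < Real.exp (-c * t) := Real.exp_pos _
    have h2 := (hz t ht).2
    have h3 : Real.exp (-c * t) * (z t ^ 2 / 2 + r t) ≤ Real.exp (-c * t) * z' t :=
      mul_le_mul_of_nonneg_left h2 hE.le
    have hq' : q t = Real.exp (-c * t) * ((z t - c) ^ 2 / 2) := by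
      simp only [hqdef, hZeq t ht]
    have hψ' : ψ t = Real.exp (-c * t) * (r t - c ^ 2 / 2) := by
      simp only [hψdef, hReq t ht]
    simp only [hφdef, hq', hψ']
    nlinarith [hE.le]
  -- u = y - Φ is monotone on [0,∞)
  set u : ℝ → ℝ := fun T => y T - Φ T with hudef
  have humono : MonotoneOn u (Ici 0) := by
    apply monotoneOn_of_hasDerivWithinAt_nonneg (convex_Ici 0)
      (f' := fun t => (Real.exp (-c * t) * (-c * 1) * z t + Real.exp (-c * t) * z' t) - φ t)
    · exact hyc.sub (fun t _ => (hΦ t).continuousAt.continuousWithinAt)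
    · intro x hx
      rw [interior_Ici] at hx
      have hyx : HasDerivAt y (Real.exp (-c * x) * (-c * 1) * z x + Real.exp (-c * x) * z' x) x :=
        (hy x (Set.mem_Ici.mpr (Set.mem_Ioi.mp hx).le)).hasDerivAt (Ici_mem_nhds hx)
      exact ((hyx.sub (hΦ x)).hasDerivWithinAt)
    · intro x hx
      rw [interior_Ici] at hx
      have := hφle x hx.le
      linarith
  -- basic consequence: z₀ + Φ T ≤ y T for T ≥ 0
  have hu0 : u 0 = z₀ := by
    simp [hudef, hΦdef, hydef, intervalIntegral.integral_same, hz0]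
  have hkey0 : ∀ T : ℝ, 0 ≤ T → z₀ + Φ T ≤ y T := by
    intro T hT
    have := humono (self_mem_Ici) hT hT
    rw [hu0] at this
    simp only [hudef] at this
    linarith
  -- decompose Φ
  have hIint : ∀ T : ℝ, (∫ t in (0:ℝ)..T, Real.exp (-c * t) * R t)
      - (c ^ 2 / 2) * ∫ t in (0:ℝ)..T, Real.exp (-c * t) = ∫ t in (0:ℝ)..T, ψ t := by
    intro T
    rw [← intervalIntegral.integral_const_mul, ← intervalIntegral.integral_sub (f := fun t => Real.exp (-c * t) * R t) (g := fun t => c ^ 2 / 2 * Real.exp (-c * t))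
      ((hec.mul hR).intervalIntegrable 0 T) ((continuous_const.mul hec).intervalIntegrable 0 T)]
    apply intervalIntegral.integral_congr
    intro t _
    simp only [hψdef]
    ring
  have hΦsplit : ∀ T : ℝ, Φ T = (∫ t in (0:ℝ)..T, q t) + ∫ t in (0:ℝ)..T, ψ t := by
    intro T
    simp only [hΦdef, hφdef]
    exact intervalIntegral.integral_add (hqc.intervalIntegrable 0 T) (hψc.intervalIntegrable 0 T)
  -- the weighted r-integral agrees with the R-integral for T ≥ 0
  have hIR : ∀ T : ℝ, 0 ≤ T →
      (∫ t in (0:ℝ)..T, Real.exp (-c * t) * R t)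
        = ∫ t in (0:ℝ)..T, Real.exp (-c * t) * r t := by
    intro T hT
    apply intervalIntegral.integral_congr
    intro t ht
    rw [uIcc_of_le hT] at ht
    simp only
    rw [hReq t ht.1]
  -- the exponential integral bound
  have hexpint : ∀ T : ℝ, 0 ≤ T →
      (c ^ 2 / 2) * (∫ t in (0:ℝ)..T, Real.exp (-c * t)) ≤ c / 2 := by
    intro T hT
    rcases eq_or_lt_of_le hc with hc0 | hcpos
    · rw [← hc0]; norm_num
    · have hA : ∀ t : ℝ, HasDerivAt (fun s => -Real.exp (-c * s) / c) (Real.exp (-c * t)) t := by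
        intro t
        have := ((hecd t).neg).div_const c
        exact this.congr_deriv (by rw [div_eq_iff hcpos.ne']; ring)
      rw [intervalIntegral.integral_eq_sub_of_hasDerivAt (fun t _ => hA t)
        (hec.intervalIntegrable 0 T)]
      have h1 : Real.exp (-c * T) > 0 := Real.exp_pos _
      have h2 : Real.exp (-c * 0) = 1 := by norm_num
      rw [h2]
      rw [div_sub_div_same]
      have : c ^ 2 / 2 * ((-Real.exp (-c * T) - -1) / c) = c / 2 * (1 - Real.exp (-c * T)) := by
        field_simp
        ring
      rw [this]
      nlinarith
  -- main integral inequality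
  have hkey : ∀ T : ℝ, 0 ≤ T →
      z₀ + (∫ t in (0:ℝ)..T, q t) + (∫ t in (0:ℝ)..T, Real.exp (-c * t) * r t) - c / 2 ≤ y T := by
    intro T hT
    have h1 := hkey0 T hT
    have h2 := hΦsplit T
    have h3 := hIint T
    have h4 := hIR T hT
    have h5 := hexpint T hT
    rw [← h4]
    linarith
  -- extract an eventual lower bound from the liminf hypothesis
  obtain ⟨a, ha, hev⟩ : ∃ a : ℝ, c / 2 < a ∧
      ∀ᶠ T in atTop, a ≤ ∫ t in (0:ℝ)..T, Real.exp (-c * t) * r t := by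
    set S := {b : ℝ | ∀ᶠ T in atTop, b ≤ ∫ t in (0:ℝ)..T, Real.exp (-c * t) * r t} with hSdef
    have hlim : liminf (fun T : ℝ => ∫ t in (0:ℝ)..T, Real.exp (-c * t) * r t) atTop = sSup S :=
      Filter.liminf_eq
    rcases S.eq_empty_or_nonempty with hS | hS
    · rw [hlim, hS, Real.sSup_empty] at h; linarith
    · have hlt : c / 2 < sSup S := by rw [hlim] at h; linarith
      obtain ⟨b, hbS, hb⟩ := exists_lt_of_lt_csSup hS hlt
      exact ⟨b, hb, hbS⟩
  set ε : ℝ := a - c / 2 with hεdef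
  have hε : 0 < ε := by simp only [hεdef]; linarith
  obtain ⟨T₀', hT₀'⟩ := eventually_atTop.mp hev
  set T₀ : ℝ := max T₀' 0 with hT₀def
  have hT₀0 : (0:ℝ) ≤ T₀ := le_max_right _ _
  have hQQnn : ∀ T : ℝ, 0 ≤ T → 0 ≤ ∫ t in (0:ℝ)..T, q t := fun T hT =>
    intervalIntegral.integral_nonneg hT fun t _ => hqnn t
  -- for T ≥ T₀ : ε + ∫₀^T q ≤ y T
  have h6 : ∀ T : ℝ, T₀ ≤ T → ε + (∫ t in (0:ℝ)..T, q t) ≤ y T := by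
    intro T hT
    have hT0 : (0:ℝ) ≤ T := le_trans hT₀0 hT
    have h1 := hkey T hT0
    have h2 := hT₀' T (le_trans (le_max_left _ _) hT)
    simp only [hεdef]
    linarith
  have hyε : ∀ T : ℝ, T₀ ≤ T → ε ≤ y T := by
    intro T hT
    have := h6 T hT
    have := hQQnn T (le_trans hT₀0 hT)
    linarith
  -- pick T₁ ≥ T₀ with 2c ≤ ε e^{cT₁}
  obtain ⟨T₁, hT₁ge, hT₁c⟩ : ∃ T₁ : ℝ, T₀ ≤ T₁ ∧ 2 * c ≤ ε * Real.exp (c * T₁) := by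
    rcases eq_or_lt_of_le hc with hc0 | hcpos
    · refine ⟨T₀, le_refl _, ?_⟩
      rw [← hc0]
      have := (Real.exp_pos ((0:ℝ) * T₀)).le
      nlinarith
    · have htend : Tendsto (fun T : ℝ => ε * Real.exp (c * T)) atTop atTop := by
        apply Tendsto.const_mul_atTop hε
        exact Real.tendsto_exp_atTop.comp (tendsto_id.const_mul_atTop hcpos)
      obtain ⟨T₁, hT₁⟩ := ((htend.eventually_ge_atTop (2 * c)).and
        (eventually_ge_atTop T₀)).exists
      exact ⟨T₁, hT₁.2, hT₁.1⟩
  have hT₁0 : (0:ℝ) ≤ T₁ := le_trans hT₀0 hT₁ge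
  -- relation z = e^{ct} y
  have hzy : ∀ t : ℝ, z t = Real.exp (c * t) * y t := by
    intro t
    simp only [hydef]
    rw [← mul_assoc, ← Real.exp_add]
    norm_num
  -- F
  set F : ℝ → ℝ := fun T => ε + ∫ t in T₁..T, q t with hFdef
  have hF' : ∀ t : ℝ, HasDerivAt F (q t) t := fun t =>
    ((hqc.integral_hasStrictDerivAt T₁ t).hasDerivAt).const_add ε
  have hFε : ∀ T : ℝ, T₁ ≤ T → ε ≤ F T := by
    intro T hT
    have : 0 ≤ ∫ t in T₁..T, q t := intervalIntegral.integral_nonneg hT fun t _ => hqnn t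
    simp only [hFdef]
    linarith
  -- F ≤ y on [T₁, ∞)
  have hFy : ∀ T : ℝ, T₁ ≤ T → F T ≤ y T := by
    intro T hT
    have hadj : (∫ t in (0:ℝ)..T₁, q t) + (∫ t in T₁..T, q t) = ∫ t in (0:ℝ)..T, q t :=
      intervalIntegral.integral_add_adjacent_intervals (hqc.intervalIntegrable 0 T₁)
        (hqc.intervalIntegrable T₁ T)
    have h1 := h6 T (le_trans hT₁ge hT)
    have h2 := hQQnn T₁ hT₁0
    simp only [hFdef]
    linarith
  -- key Riccati bound: F² / 8 ≤ q on [T₁, ∞)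
  have hq8 : ∀ t : ℝ, T₁ ≤ t → F t ^ 2 / 8 ≤ q t := by
    intro t ht
    have ht0 : (0:ℝ) ≤ t := le_trans hT₁0 ht
    have hyt : ε ≤ y t := hyε t (le_trans hT₁ge ht)
    have hexp1 : (1:ℝ) ≤ Real.exp (c * t) := by
      rw [← Real.exp_zero]
      exact Real.exp_le_exp.mpr (by positivity)
    have hexpmono : Real.exp (c * T₁) ≤ Real.exp (c * t) :=
      Real.exp_le_exp.mpr (mul_le_mul_of_nonneg_left ht hc)
    have hz2c : 2 * c ≤ z t := by
      rw [hzy t]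
      calc 2 * c ≤ ε * Real.exp (c * T₁) := hT₁c
        _ ≤ ε * Real.exp (c * t) := mul_le_mul_of_nonneg_left hexpmono hε.le
        _ = Real.exp (c * t) * ε := by ring
        _ ≤ Real.exp (c * t) * y t := mul_le_mul_of_nonneg_left hyt (Real.exp_pos _).le
    have hzt0 : 0 ≤ z t := le_trans (by linarith) hz2c
    -- (z - c)² ≥ z²/4
    have hsq : z t ^ 2 / 4 ≤ (z t - c) ^ 2 := by nlinarith
    have hqt : q t = Real.exp (-c * t) * ((z t - c) ^ 2 / 2) := by
      simp only [hqdef, hZeq t ht0]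
    -- e^{-ct} z² = e^{ct} y²
    have hzz : Real.exp (-c * t) * z t ^ 2 = Real.exp (c * t) * y t ^ 2 := by
      have hne : Real.exp (-c * t) = (Real.exp (c * t))⁻¹ := by
        rw [neg_mul, Real.exp_neg]
      simp only [hydef, hne]
      have := Real.exp_ne_zero (c * t)
      field_simp
    have hFle : F t ≤ y t := hFy t ht
    have hFpos : 0 < F t := lt_of_lt_of_le hε (hFε t ht)
    have hF2 : F t ^ 2 ≤ y t ^ 2 := pow_le_pow_left₀ hFpos.le hFle 2
    have hy2 : y t ^ 2 ≤ Real.exp (c * t) * y t ^ 2 :=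
      le_mul_of_one_le_left (sq_nonneg _) hexp1
    have hchain : Real.exp (-c * t) * (z t ^ 2 / 4 / 2) = Real.exp (-c * t) * z t ^ 2 / 8 := by
      ring
    rw [hqt]
    have hEpos : (0:ℝ) < Real.exp (-c * t) := Real.exp_pos _
    calc F t ^ 2 / 8 ≤ y t ^ 2 / 8 := by gcongr
      _ ≤ Real.exp (c * t) * y t ^ 2 / 8 := by gcongr ?_ / 8
      _ = Real.exp (-c * t) * z t ^ 2 / 8 := by rw [hzz]
      _ = Real.exp (-c * t) * (z t ^ 2 / 4 / 2) := by ring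
      _ ≤ Real.exp (-c * t) * ((z t - c) ^ 2 / 2) := by
          apply mul_le_mul_of_nonneg_left _ hEpos.le
          linarith
  -- W = -1/F - T/8 is monotone on [T₁, ∞)
  set W : ℝ → ℝ := fun T => -(F T)⁻¹ - T / 8 with hWdef
  have hWmono : MonotoneOn W (Ici T₁) := by
    apply monotoneOn_of_hasDerivWithinAt_nonneg (convex_Ici T₁)
      (f' := fun t => q t / F t ^ 2 - 1 / 8)
    · intro t ht
      have hFpos : 0 < F t := lt_of_lt_of_le hε (hFε t ht)
      exact ((((hF' t).continuousAt.inv₀ hFpos.ne').neg).sub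
        ((continuousAt_id.div_const 8))).continuousWithinAt
    · intro x hx
      rw [interior_Ici] at hx
      have hFpos : 0 < F x := lt_of_lt_of_le hε (hFε x hx.le)
      have h1 : HasDerivAt (fun T => -(F T)⁻¹) (q x / F x ^ 2) x := by
        have := ((hF' x).inv hFpos.ne').neg
        exact this.congr_deriv (by rw [neg_div, neg_neg])
      have h2 : HasDerivAt (fun T : ℝ => T / 8) (1 / 8) x := by
        simpa using (hasDerivAt_id x).div_const 8
      exact ((h1.sub h2).hasDerivWithinAt)
    · intro x hx
      rw [interior_Ici] at hx
      have hFpos : 0 < F x := lt_of_lt_of_le hε (hFε x hx.le)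
      have h8 := hq8 x hx.le
      have : 1 / 8 ≤ q x / F x ^ 2 := by
        rw [le_div_iff₀ (by positivity)]
        linarith
      linarith
  -- conclusion: evaluate at T = T₁ + 16/ε
  set T₂ : ℝ := T₁ + 16 / ε with hT₂def
  have hT₂ge : T₁ ≤ T₂ := by
    simp only [hT₂def]
    have : 0 < 16 / ε := by positivity
    linarith
  have hmono := hWmono (self_mem_Ici) hT₂ge hT₂ge
  have hFT₁ : F T₁ = ε := by
    simp [hFdef, intervalIntegral.integral_same]
  have hFT₂pos : 0 < F T₂ := lt_of_lt_of_le hε (hFε T₂ hT₂ge)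
  have hinvpos : 0 < (F T₂)⁻¹ := inv_pos.mpr hFT₂pos
  simp only [hWdef, hFT₁, hT₂def] at hmono
  have hεinv : 0 < ε⁻¹ := inv_pos.mpr hε
  have harith : (T₁ + 16 / ε) / 8 = T₁ / 8 + 2 * ε⁻¹ := by
    field_simp
    ring
  rw [harith] at hmono
  have : ε⁻¹ = 1 / ε := by rw [inv_eq_one_div]
  linarith
end

section
/- Let r : [0,∞) → ℝ be continuous with liminf_{T→∞} ∫₀^T r(t) dt > 0, and let z₀ ≥ 0 and s > 0. Then there is no differentiable function z : [0,∞) → ℝ with z(0) = z₀ and z'(t) = z(t)²/s + r(t) for all t ≥ 0. -/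
open MeasureTheory Filter Set

/-- The `c = 0` (ANEC) special case of Lemma 1.1: if `r` is continuous on `[0,∞)` with
`liminf_{T→∞} ∫₀^T r(t) dt > 0`, `z₀ ≥ 0`, and `s > 0`, then there is no differentiable
`z : [0,∞) → ℝ` with `z(0) = z₀` and `ż(t) = z(t)²/s + r(t)` for all `t ≥ 0`. -/
theorem anec_no_global_solution
    (r : ℝ → ℝ) (hr : ContinuousOn r (Ici 0))
    (hliminf : 0 < liminf (fun T : ℝ => ∫ t in (0:ℝ)..T, r t) atTop)
    (z₀ : ℝ) (hz₀ : 0 ≤ z₀) (s : ℝ) (hs : 0 < s) :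
    ¬ ∃ z : ℝ → ℝ, z 0 = z₀ ∧
      ∀ t ∈ Ici (0:ℝ), HasDerivWithinAt z (z t ^ 2 / s + r t) (Ici 0) t := by
  rintro ⟨z, hz0, hz⟩
  set R : ℝ → ℝ := fun T => ∫ t in (0:ℝ)..T, r t with hR
  -- continuity of z on [0,∞)
  have hzc : ContinuousOn z (Ici 0) := fun t ht => (hz t ht).continuousWithinAt
  set q : ℝ → ℝ := fun t => z t ^ 2 / s with hq
  have hqc : ContinuousOn q (Ici 0) := (hzc.pow 2).div_const s
  have hqnn : ∀ t, 0 ≤ q t := fun t => by positivity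
  have hsub : ∀ a b : ℝ, 0 ≤ a → Icc a b ⊆ Ici (0:ℝ) := fun a b ha =>
    Icc_subset_Ici_self.trans (Ici_subset_Ici.2 ha)
  have hqi : ∀ a b : ℝ, 0 ≤ a → a ≤ b → IntervalIntegrable q volume a b := fun a b ha hab =>
    (hqc.mono (hsub a b ha)).intervalIntegrable_of_Icc hab
  have hri : ∀ a b : ℝ, 0 ≤ a → a ≤ b → IntervalIntegrable r volume a b := fun a b ha hab =>
    (hr.mono (hsub a b ha)).intervalIntegrable_of_Icc hab
  -- FTC
  have key : ∀ b : ℝ, 0 ≤ b → (∫ t in (0:ℝ)..b, q t) + R b = z b - z 0 := by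
    intro b hb
    have h1 : ∫ t in (0:ℝ)..b, (q t + r t) = z b - z 0 := by
      apply intervalIntegral.integral_eq_sub_of_hasDeriv_right_of_le hb
        (hzc.mono (hsub 0 b le_rfl))
      · intro x hx
        have hx0 : (0:ℝ) < x := hx.1
        exact ((hz x hx0.le).hasDerivAt (Ici_mem_nhds hx0)).hasDerivWithinAt
      · exact (hqi 0 b le_rfl hb).add (hri 0 b le_rfl hb)
    rw [← h1, intervalIntegral.integral_add (hqi 0 b le_rfl hb) (hri 0 b le_rfl hb)]
  -- extract ε and T₀
  have hbdd : IsBoundedUnder (· ≥ ·) atTop R := by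
    by_contra hb
    have hempty : {a : ℝ | ∀ᶠ T in atTop, a ≤ R T} = ∅ := by
      ext a
      simp only [mem_setOf_eq, mem_empty_iff_false, iff_false]
      intro ha
      exact hb ⟨a, ha.mono fun x hx => hx⟩
    rw [liminf_eq, hempty, Real.sSup_empty] at hliminf
    exact lt_irrefl 0 hliminf
  obtain ⟨ε, hε0, hεl⟩ := exists_between hliminf
  have hev : ∀ᶠ T in atTop, ε < R T := eventually_lt_of_lt_liminf hεl hbdd
  obtain ⟨T₀', hT₀'⟩ := eventually_atTop.1 hev
  set T₀ : ℝ := max T₀' 0 with hT₀def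
  have hT₀0 : (0:ℝ) ≤ T₀ := le_max_right _ _
  have hT₀R : ∀ t, T₀ ≤ t → ε < R t := fun t ht => hT₀' t ((le_max_left _ _).trans ht)
  -- the primitive g
  set g : ℝ → ℝ := fun t => ∫ x in T₀..t, q x with hg
  have hgnn : ∀ t, T₀ ≤ t → 0 ≤ g t := fun t ht =>
    intervalIntegral.integral_nonneg ht fun u _ => hqnn u
  -- main inequality : ε + g t ≤ z t for t ≥ T₀
  have hzge : ∀ t, T₀ ≤ t → ε + g t ≤ z t := by
    intro t ht
    have ht0 : (0:ℝ) ≤ t := hT₀0.trans ht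
    have hk := key t ht0
    have hsplit : (∫ x in (0:ℝ)..T₀, q x) + g t = ∫ x in (0:ℝ)..t, q x :=
      intervalIntegral.integral_add_adjacent_intervals (hqi 0 T₀ le_rfl hT₀0)
        (hqi T₀ t hT₀0 ht)
    have h0T₀ : 0 ≤ ∫ x in (0:ℝ)..T₀, q x :=
      intervalIntegral.integral_nonneg hT₀0 fun u _ => hqnn u
    have hRt : ε < R t := hT₀R t ht
    rw [hz0] at hk
    nlinarith [hk, hsplit]
  -- set up the comparison function on [T₀, T]
  set T : ℝ := T₀ + 2 * (s / ε) with hT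
  have hTT : T₀ ≤ T := by
    have : 0 ≤ s / ε := le_of_lt (div_pos hs hε0)
    simp [hT]; linarith
  have hApos : ∀ x ∈ Icc T₀ T, 0 < g x + ε := fun x hx => by
    have := hgnn x hx.1; linarith
  have hgc : ContinuousOn g (Icc T₀ T) := by
    have : IntegrableOn q (uIcc T₀ T) volume := by
      rw [uIcc_of_le hTT]
      exact (hqc.mono (hsub T₀ T hT₀0)).integrableOn_Icc
    simpa [uIcc_of_le hTT] using intervalIntegral.continuousOn_primitive_interval this
  set φ : ℝ → ℝ := fun t => -(g t + ε)⁻¹ - t / s with hφ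
  have hφc : ContinuousOn φ (Icc T₀ T) := by
    apply ContinuousOn.sub
    · exact ((hgc.add continuousOn_const).inv₀ fun x hx => (hApos x hx).ne').neg
    · exact (continuous_id.div_const s).continuousOn
  have hφderiv : ∀ x ∈ Ioo T₀ T, HasDerivAt φ (q x / (g x + ε) ^ 2 - 1 / s) x := by
    intro x hx
    have hx0 : (0:ℝ) < x := lt_of_le_of_lt hT₀0 hx.1
    have hgd : HasDerivAt g (q x) x := by
      apply intervalIntegral.integral_hasDerivAt_right (hqi T₀ x hT₀0 hx.1.le)
      · exact ⟨Ici 0, Ici_mem_nhds hx0, (hqc.mono Subset.rfl).aestronglyMeasurable measurableSet_Ici⟩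
      · exact (hqc x hx0.le).continuousAt (Ici_mem_nhds hx0)
    have hne : g x + ε ≠ 0 := (hApos x ⟨hx.1.le, hx.2.le⟩).ne'
    have h1 : HasDerivAt (fun t => -(g t + ε)⁻¹) (q x / (g x + ε) ^ 2) x := by
      have := ((hgd.add_const ε).inv hne).neg
      rw [neg_div, neg_neg] at this
      exact this
    have h2 := h1.sub ((hasDerivAt_id x).div_const s)
    exact h2
  have hφmono : MonotoneOn φ (Icc T₀ T) := by
    apply monotoneOn_of_deriv_nonneg (convex_Icc T₀ T) hφc
    · intro x hx
      rw [interior_Icc] at hx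
      exact (hφderiv x hx).differentiableAt.differentiableWithinAt
    · intro x hx
      rw [interior_Icc] at hx
      rw [(hφderiv x hx).deriv]
      have hA : 0 < g x + ε := hApos x ⟨hx.1.le, hx.2.le⟩
      have hzx : g x + ε ≤ z x := by have := hzge x hx.1.le; linarith
      have hsq : (g x + ε) ^ 2 ≤ z x ^ 2 := by nlinarith
      rw [sub_nonneg, hq, div_div, div_le_div_iff₀ hs (by positivity)]
      nlinarith
  -- conclude
  have hmem₀ : T₀ ∈ Icc T₀ T := ⟨le_rfl, hTT⟩
  have hmemT : T ∈ Icc T₀ T := ⟨hTT, le_rfl⟩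
  have hfin := hφmono hmem₀ hmemT hTT
  have hgT₀ : g T₀ = 0 := intervalIntegral.integral_same
  have hAT : 0 < g T + ε := hApos T hmemT
  have hinv : 0 < (g T + ε)⁻¹ := inv_pos.2 hAT
  have hTs : T / s = T₀ / s + 2 * ε⁻¹ := by
    rw [hT, add_div, mul_div_assoc]
    congr 1
    rw [div_right_comm, div_self hs.ne', one_div]
  have hεinv : 0 < ε⁻¹ := inv_pos.2 hε0
  rw [hφ] at hfin
  simp only [hgT₀, zero_add] at hfin
  rw [hTs] at hfin
  linarith
end
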